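/- Let β : ℝ³ → ℝ³ be differentiable at x, ε(x) > 0 and γ(x) ∈ ℝ. For 1 ≤ i ≤ 3 define ℛ^i ∈ ℝ^{3×3} by (ℛ^i)_{jk} = ε_{jik} (Levi–Civita), and set 𝒜^i := [[0_{3,3}, −ℛ^i],[−(ℛ^i)ᵀ, β_i I₃]] and 𝒦 := [[ε⁻¹ I₃, 0_{3,3}],[0_{3,3}, ∇β − V_{∇×β} + γ I₃]], where (∇β)_{jk} = ∂_k β_j is the Jacobian. Then for any b, p : ℝ³ → ℝ³ differentiable at x and z := (b, p), one has, at x, 𝒦 z + Σ_{i=1}^3 𝒜^i ∂_i z = ( ε⁻¹ b − ∇×p , ∇×b − β×(∇×p) + ∇(β·p) + γ p ). In other words, the first-order Friedrichs operator with these coefficients applied to (b, p) reproduces the system ε⁻¹b − ∇×p = 0, ∇×b + L_β p + γp = f_p, where L_β p := −β×(∇×p) + ∇(β·p) is the Lie derivative. -/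

import Mathlib

open Matrix

/-- The Levi–Civita symbol on `{0, 1, 2}`. -/
def levCiv (i j k : Fin 3) : ℝ :=
  if (i = 0 ∧ j = 1 ∧ k = 2) ∨ (i = 1 ∧ j = 2 ∧ k = 0) ∨ (i = 2 ∧ j = 0 ∧ k = 1) then 1
  else if (i = 0 ∧ j = 2 ∧ k = 1) ∨ (i = 2 ∧ j = 1 ∧ k = 0) ∨ (i = 1 ∧ j = 0 ∧ k = 2) then -1
  else 0

/-- Partial derivative `∂_j u_k` of the `k`-th component of a vector field `u : ℝ³ → ℝ³`. -/
noncomputable def pd3 (j : Fin 3) (u : (Fin 3 → ℝ) → Fin 3 → ℝ) (k : Fin 3) (x : Fin 3 → ℝ) : ℝ :=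
  fderiv ℝ (fun y => u y k) x (Pi.single j 1)

/-- The curl `(∇×u)_i = Σ_{j,k} ε_{ijk} ∂_j u_k` of a vector field `u : ℝ³ → ℝ³`. -/
noncomputable def curl3 (u : (Fin 3 → ℝ) → Fin 3 → ℝ) (x : Fin 3 → ℝ) : Fin 3 → ℝ :=
  fun i => ∑ j, ∑ k, levCiv i j k * pd3 j u k x

/-- The cross-product matrix `V_α`, characterized by `V_α s = α × s`. -/
def crossMat (α : Fin 3 → ℝ) : Matrix (Fin 3) (Fin 3) ℝ :=
  !![0, -α 2, α 1; α 2, 0, -α 0; -α 1, α 0, 0]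

lemma fin3_mk2 (h : 2 < 3) : (⟨2, h⟩ : Fin 3) = 2 := rfl

lemma curl3_zero (u : (Fin 3 → ℝ) → Fin 3 → ℝ) (x : Fin 3 → ℝ) :
    curl3 u x 0 = pd3 1 u 2 x - pd3 2 u 1 x := by
  simp [curl3, levCiv, Fin.sum_univ_three]; ring

lemma curl3_one (u : (Fin 3 → ℝ) → Fin 3 → ℝ) (x : Fin 3 → ℝ) :
    curl3 u x 1 = pd3 2 u 0 x - pd3 0 u 2 x := by
  simp [curl3, levCiv, Fin.sum_univ_three]; ring

lemma curl3_two (u : (Fin 3 → ℝ) → Fin 3 → ℝ) (x : Fin 3 → ℝ) :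
    curl3 u x 2 = pd3 0 u 1 x - pd3 1 u 0 x := by
  simp [curl3, levCiv, Fin.sum_univ_three]; ring

/-- With `ℛⁱ` given by `(ℛⁱ)_{jk} = ε_{jik}`,
`𝒜ⁱ = [[0, −ℛⁱ],[−(ℛⁱ)ᵀ, βᵢ I₃]]` and `𝒦 = [[ε⁻¹ I₃, 0],[0, ∇β − V_{∇×β} + γ I₃]]`, the
first-order Friedrichs operator applied to `z = (b, p)` reproduces
`(ε⁻¹ b − ∇×p, ∇×b − β×(∇×p) + ∇(β·p) + γ p)`. -/
theorem stmt12 (β b p : (Fin 3 → ℝ) → Fin 3 → ℝ) (x : Fin 3 → ℝ) (e g : ℝ) (he : 0 < e)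
    (hβ : DifferentiableAt ℝ β x) (hb : DifferentiableAt ℝ b x)
    (hp : DifferentiableAt ℝ p x) :
    let R : Fin 3 → Matrix (Fin 3) (Fin 3) ℝ := fun i => Matrix.of fun j k => levCiv j i k
    let A : Fin 3 → Matrix (Fin 3 ⊕ Fin 3) (Fin 3 ⊕ Fin 3) ℝ := fun i =>
      Matrix.fromBlocks 0 (-(R i)) (-(R i)ᵀ) (β x i • 1)
    let K : Matrix (Fin 3 ⊕ Fin 3) (Fin 3 ⊕ Fin 3) ℝ :=
      Matrix.fromBlocks (e⁻¹ • 1) 0 0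
        ((Matrix.of fun j k => pd3 k β j x) - crossMat (curl3 β x) + g • 1)
    K.mulVec (Sum.elim (b x) (p x)) +
        ∑ i, (A i).mulVec (Sum.elim (fun k => pd3 i b k x) (fun k => pd3 i p k x)) =
      Sum.elim (e⁻¹ • b x - curl3 p x)
        (curl3 b x - crossProduct (β x) (curl3 p x) +
          (fun j => fderiv ℝ (fun y => β y ⬝ᵥ p y) x (Pi.single j 1)) + g • p x) := by
  intro R A K
  have hβk : ∀ k, DifferentiableAt ℝ (fun y => β y k) x := fun k => (differentiableAt_pi.mp hβ) k
  have hpk : ∀ k, DifferentiableAt ℝ (fun y => p y k) x := fun k => (differentiableAt_pi.mp hp) k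
  have hdot : ∀ j : Fin 3,
      fderiv ℝ (fun y => β y 0 * p y 0 + β y 1 * p y 1 + β y 2 * p y 2) x (Pi.single j 1) =
      pd3 j β 0 x * p x 0 + β x 0 * pd3 j p 0 x + (pd3 j β 1 x * p x 1 + β x 1 * pd3 j p 1 x)
        + (pd3 j β 2 x * p x 2 + β x 2 * pd3 j p 2 x) := by
    intro j
    rw [fderiv_fun_add (f := fun y => β y 0 * p y 0 + β y 1 * p y 1) (g := fun y => β y 2 * p y 2)
        (((hβk 0).mul (hpk 0)).add ((hβk 1).mul (hpk 1))) ((hβk 2).mul (hpk 2)),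
      fderiv_fun_add (f := fun y => β y 0 * p y 0) (g := fun y => β y 1 * p y 1)
        ((hβk 0).mul (hpk 0)) ((hβk 1).mul (hpk 1))]
    simp only [fderiv_fun_mul (hβk _) (hpk _), ContinuousLinearMap.add_apply,
      ContinuousLinearMap.smul_apply, smul_eq_mul, pd3]
    ring
  funext s
  rcases s with j | j <;> fin_cases j <;>
    simp only [K, A, R, Matrix.fromBlocks_mulVec, Pi.add_apply, Sum.elim_inl, Sum.elim_inr,
      Finset.sum_apply, Matrix.mulVec, dotProduct, Fin.sum_univ_three,
      Matrix.smul_apply, Matrix.one_apply, Matrix.zero_apply, Matrix.add_apply, Matrix.sub_apply,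
      Matrix.neg_apply, Matrix.transpose_apply, Matrix.of_apply, crossMat, cross_apply,
      levCiv, Pi.smul_apply, Pi.sub_apply, smul_eq_mul, Fin.mk_zero, Fin.mk_one, fin3_mk2,
      curl3_zero, curl3_one, curl3_two, hdot] <;>
    norm_num [Matrix.cons_val_zero, Matrix.cons_val_one, Matrix.head_cons, Matrix.cons_val_two, Matrix.tail_cons, Fin.ext_iff,
      curl3_zero, curl3_one, curl3_two, hdot] <;>
    ring
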